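/- If τ : Z² → R is nowhere vanishing, γ^{pq}_r := τ_{r+p}τ_{r+q}/(τ_r τ_{r+p+q}), and τ satisfies the reduced discrete BKP equation τ_r τ_{r+a+b+c} = τ_{r+a+b}τ_{r+c} − τ_{r+a+c}τ_{r+b} + τ_{r+b+c}τ_{r+a} for all r ∈ Z², then the relation 1 + γ^{qs}_{r+p}(γ^{pq}_r − γ^{ps}_r) = γ^{ps}_{r+q} γ^{pq}_r holds for (p,q,s) = (a,b,c). -/

import Mathlib

theorem stmt_19 (a b c : ℤ × ℤ) (hab : a ≠ b) (hbc : b ≠ c) (hac : a ≠ c)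
    (τ : ℤ × ℤ → ℝ) (hτ : ∀ r, τ r ≠ 0)
    (γ : ℤ × ℤ → ℤ × ℤ → ℤ × ℤ → ℝ)
    (hγ : ∀ p q r : ℤ × ℤ, γ p q r = τ (r + p) * τ (r + q) / (τ r * τ (r + p + q)))
    (hBKP : ∀ r : ℤ × ℤ, τ r * τ (r + a + b + c)
      = τ (r + a + b) * τ (r + c) - τ (r + a + c) * τ (r + b) + τ (r + b + c) * τ (r + a)) :
    ∀ r : ℤ × ℤ,
      1 + γ b c (r + a) * (γ a b r - γ a c r) = γ a c (r + b) * γ a b r := by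
  intro r
  have h := hBKP r
  simp only [hγ]
  have e1 : r + a + b + c = r + a + (b + c) := by abel
  have e2 : r + b + a = r + a + b := by abel
  have e3 : r + b + a + c = r + a + (b + c) := by abel
  rw [e1] at h
  simp only [e2, e3, e1]
  have h1 := hτ r
  have h2 := hτ (r + a)
  have h3 := hτ (r + b)
  have h4 := hτ (r + a + b)
  have h5 := hτ (r + a + c)
  have h6 := hτ (r + a + (b + c))
  field_simp
  linear_combination h
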